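/- (Strong Cauchy interlacing law for tridiagonal matrices.) Let A be an n×n real symmetric tridiagonal matrix with diagonal entries a_1, …, a_n and off-diagonal entries b_1, …, b_{n−1} (so A_{i,i} = a_i, A_{i,i+1} = A_{i+1,i} = b_i, and all other entries are 0). Let λ_1 ≤ λ_2 ≤ ⋯ ≤ λ_n be the eigenvalues of A counted with multiplicity, and let η_1 ≤ ⋯ ≤ η_{n−1} be the eigenvalues of the (n−1)×(n−1) leading principal submatrix of A (rows and columns 1 through n−1), counted with multiplicity. If b_i ≠ 0 for all 1 ≤ i ≤ n−1, then the interlacing is strict: λ_1 < η_1 < λ_2 < η_2 < ⋯ < λ_{n−1} < η_{n−1} < λ_n. -/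

import Mathlib

open Polynomial Finset Matrix


lemma sign_prod {m : ℕ} (t : ℝ) (f : Fin m → ℝ) (hne : ∀ j, t ≠ f j) :
    0 < (-1 : ℝ) ^ (univ.filter fun j => t < f j).card * ∏ j, (t - f j) := by
  classical
  rw [← Finset.prod_filter_mul_prod_filter_not univ (fun j => t < f j) (fun j => t - f j)]
  have h1 : ∏ j ∈ univ.filter fun j => t < f j, (t - f j)
      = (-1 : ℝ) ^ (univ.filter fun j => t < f j).card *
        ∏ j ∈ univ.filter fun j => t < f j, (f j - t) := by
    rw [← Finset.prod_const, ← Finset.prod_mul_distrib]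
    exact Finset.prod_congr rfl fun j _ => by ring
  rw [h1]
  have h2 : (0:ℝ) < ∏ j ∈ univ.filter fun j => t < f j, (f j - t) :=
    Finset.prod_pos fun j hj => by simp at hj; linarith
  have h3 : (0:ℝ) < ∏ j ∈ univ.filter fun j => ¬ t < f j, (t - f j) :=
    Finset.prod_pos fun j hj => by
      simp at hj
      rcases lt_or_eq_of_le hj with h | h
      · linarith
      · exact absurd h.symm (hne j)
  have key : (-1 : ℝ) ^ (univ.filter fun j => t < f j).card *
      (((-1 : ℝ) ^ (univ.filter fun j => t < f j).card *
        ∏ j ∈ univ.filter fun j => t < f j, (f j - t)) *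
       ∏ j ∈ univ.filter fun j => ¬ t < f j, (t - f j))
      = (((-1 : ℝ) ^ (univ.filter fun j => t < f j).card)^2) *
        ((∏ j ∈ univ.filter fun j => t < f j, (f j - t)) *
         ∏ j ∈ univ.filter fun j => ¬ t < f j, (t - f j)) := by ring
  rw [key, ← pow_mul, mul_comm _ 2, pow_mul, neg_one_sq, one_pow, one_mul]
  exact mul_pos h2 h3

lemma card_filter_le_val {m s : ℕ} (hs : s ≤ m) :
    (univ.filter fun j : Fin m => m - s ≤ (j : ℕ)).card = s := by
  rcases Nat.eq_zero_or_pos s with rfl | hpos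
  · rw [Finset.card_eq_zero]
    ext j
    have := j.isLt
    simp only [mem_filter, mem_univ, true_and, Finset.notMem_empty, iff_false, not_le]
    omega
  · have hlt : m - s < m := by omega
    have : (univ.filter fun j : Fin m => m - s ≤ (j : ℕ)) = Finset.Ici (⟨m - s, hlt⟩ : Fin m) := by
      ext j
      simp [Fin.le_def]
    rw [this, Fin.card_Ici]
    simp only [Fin.val_mk]
    omega

lemma prod_X_sub_C_inj {m : ℕ} {f g : Fin m → ℝ} (hf : Monotone f) (hg : Monotone g)
    (h : ∏ i, (X - C (f i)) = ∏ i, (X - C (g i))) : f = g := by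
  have hr : Multiset.map f Finset.univ.val = Multiset.map g Finset.univ.val := by
    have h1 := Polynomial.roots_multiset_prod_X_sub_C (Multiset.map f Finset.univ.val)
    have h2 := Polynomial.roots_multiset_prod_X_sub_C (Multiset.map g Finset.univ.val)
    rw [Multiset.map_map, Function.comp_def] at h1 h2
    simp only [Finset.prod] at h
    rw [← h1, ← h2, h]
  have hl : List.Perm (List.ofFn f) (List.ofFn g) := by
    rw [← Multiset.coe_eq_coe]
    simpa [Fin.univ_val_map] using hr
  have heq := hl.eq_of_sortedLE hf.sortedLE_ofFn hg.sortedLE_ofFn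
  exact List.ofFn_injective heq


lemma count_threshold {m l c : ℕ} {ρ : Fin m → ℝ} (hρ : Monotone ρ) {μ : Fin (l+1) → ℝ}
    (hμ : StrictMono μ)
    (hc : l ≤ c) (hcm : c ≤ m) (hm : m ≤ c + 1) (hcl : c ≤ l + 1)
    (h : ∀ i : Fin (l+1), 0 < (-1:ℝ) ^ (c - (i:ℕ)) * ∏ j, (μ i - ρ j)) :
    ∀ (i : Fin (l+1)) (j : Fin m), μ i < ρ j ↔ m - (c - (i:ℕ)) ≤ (j:ℕ) := by
  classical
  set cnt : Fin (l+1) → ℕ := fun i => (univ.filter fun j => μ i < ρ j).card with hcnt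
  have hProdne : ∀ i, ∏ j, (μ i - ρ j) ≠ 0 := by
    intro i h0
    simpa [h0] using h i
  have hne : ∀ i j, μ i ≠ ρ j := by
    intro i j
    have := Finset.prod_ne_zero_iff.mp (hProdne i) j (mem_univ j)
    exact fun hEq => this (by rw [hEq, sub_self])
  have parity : ∀ i, Even (cnt i + (c - (i:ℕ))) := by
    intro i
    have h1 := sign_prod (μ i) ρ (hne i)
    have h2 := h i
    by_contra hodd
    have hOdd : Odd (cnt i + (c - (i:ℕ))) := Nat.not_even_iff_odd.mp hodd
    have hpow : (-1:ℝ) ^ (cnt i + (c - (i:ℕ))) = -1 := hOdd.neg_one_pow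
    have hmul := mul_pos h1 h2
    have hre : ((-1:ℝ) ^ (cnt i) * ∏ j, (μ i - ρ j)) * ((-1:ℝ) ^ (c - (i:ℕ)) * ∏ j, (μ i - ρ j))
        = (-1:ℝ) ^ (cnt i + (c - (i:ℕ))) * (∏ j, (μ i - ρ j))^2 := by
      rw [pow_add]; ring
    rw [hre, hpow] at hmul
    nlinarith [sq_nonneg (∏ j, (μ i - ρ j))]
  have hmono : ∀ i i' : Fin (l+1), i ≤ i' → cnt i' ≤ cnt i := by
    intro i i' hii
    apply Finset.card_le_card
    intro j hj
    simp only [mem_filter, mem_univ, true_and] at hj ⊢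
    exact lt_of_le_of_lt (hμ.monotone hii) hj
  have chain : ∀ d : ℕ, ∀ i j : Fin (l+1), (j:ℕ) = (i:ℕ) + d → cnt j + d ≤ cnt i := by
    intro d
    induction d with
    | zero =>
      intro i j hij
      have : j = i := Fin.ext (by omega)
      subst this; simp
    | succ d ih =>
      intro i j hij
      have hmidlt : (i:ℕ) + d < l + 1 := by have := j.isLt; omega
      set mid : Fin (l+1) := ⟨(i:ℕ) + d, hmidlt⟩ with hmid
      have h1 : cnt mid + d ≤ cnt i := ih i mid rfl
      have hle : cnt j ≤ cnt mid := hmono mid j (by rw [Fin.le_def]; show (i:ℕ) + d ≤ (j:ℕ); omega)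
      have hne2 : cnt j ≠ cnt mid := by
        intro hEq
        obtain ⟨a, ha⟩ := parity mid
        obtain ⟨b, hb⟩ := parity j
        have hjv : (j:ℕ) = (mid:ℕ) + 1 := by simp [hmid]; omega
        have hjc : (j:ℕ) ≤ c := by have := j.isLt; omega
        omega
      omega
  have hub : ∀ i, cnt i ≤ m := by
    intro i
    have := Finset.card_filter_le univ (fun j : Fin m => μ i < ρ j)
    simpa using this
  have hcntEq : ∀ i, cnt i = c - (i:ℕ) := by
    intro i
    have hi0 : ((⟨0, Nat.succ_pos l⟩ : Fin (l+1)) : ℕ) = 0 := rfl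
    have h0 : cnt i + (i:ℕ) ≤ cnt ⟨0, Nat.succ_pos l⟩ :=
      chain (i:ℕ) ⟨0, Nat.succ_pos l⟩ i (by omega)
    have hil : (i:ℕ) ≤ l := by have := i.isLt; omega
    have hlast : cnt ⟨l, Nat.lt_succ_self l⟩ + (l - (i:ℕ)) ≤ cnt i :=
      chain (l - (i:ℕ)) i ⟨l, Nat.lt_succ_self l⟩ (by simp; omega)
    obtain ⟨a, ha⟩ := parity i
    obtain ⟨b, hb⟩ := parity ⟨l, Nat.lt_succ_self l⟩
    have hbv : ((⟨l, Nat.lt_succ_self l⟩ : Fin (l+1)) : ℕ) = l := rfl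
    rw [hbv] at hb
    have := hub ⟨0, Nat.succ_pos l⟩
    omega
  intro i j
  have hsval : (univ.filter fun j' : Fin m => μ i < ρ j').card = c - (i:ℕ) := hcntEq i
  constructor
  · intro hj
    by_contra hcon
    push_neg at hcon
    have hsub : Finset.Ici j ⊆ univ.filter fun j' => μ i < ρ j' := by
      intro j' hj'
      simp only [Finset.mem_Ici] at hj'
      simp only [mem_filter, mem_univ, true_and]
      exact lt_of_lt_of_le hj (hρ hj')
    have hcard := Finset.card_le_card hsub
    rw [Fin.card_Ici] at hcard
    have := j.isLt
    omega
  · intro hj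
    by_contra hcon
    push_neg at hcon
    have hlt : ρ j < μ i := lt_of_le_of_ne hcon (fun hEq => hne i j hEq.symm)
    have hsub : (univ.filter fun j' => μ i < ρ j') ⊆ Finset.Ioi j := by
      intro j' hj'
      simp only [mem_filter, mem_univ, true_and] at hj'
      simp only [Finset.mem_Ioi]
      by_contra hle
      push_neg at hle
      exact absurd (lt_trans hlt hj') (not_lt.mpr (hρ hle))
    have hcard := Finset.card_le_card hsub
    rw [Fin.card_Ioi] at hcard
    have := j.isLt
    omega


lemma prod_ne_of_sign {m : ℕ} {t : ℝ} {f : Fin m → ℝ} {e : ℕ}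
    (h : 0 < (-1:ℝ) ^ e * ∏ j, (t - f j)) : ∀ j, t ≠ f j := by
  intro j hEq
  have h0 : ∏ j', (t - f j') = 0 :=
    Finset.prod_eq_zero (mem_univ j) (by rw [hEq, sub_self])
  simpa [h0] using h

lemma key1 {k : ℕ} {μ : Fin (k+1) → ℝ} (hμ : StrictMono μ) {ρ : Fin (k+2) → ℝ} (hρ : Monotone ρ)
    (h : ∀ i : Fin (k+1), 0 < (-1:ℝ) ^ (k + 1 - (i:ℕ)) * ∏ j, (μ i - ρ j)) :
    (∀ i : Fin (k+1), ρ i.castSucc < μ i ∧ μ i < ρ i.succ) ∧ StrictMono ρ := by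
  have hth := count_threshold hρ hμ (c := k+1) (by omega) (by omega) (by omega) (by omega) h
  have hmain : ∀ i : Fin (k+1), ρ i.castSucc < μ i ∧ μ i < ρ i.succ := by
    intro i
    have hil : (i:ℕ) ≤ k := by have := i.isLt; omega
    constructor
    · have hnlt : ¬ μ i < ρ i.castSucc := by
        rw [hth i i.castSucc]
        simp only [Fin.coe_castSucc]
        omega
      have hne := prod_ne_of_sign (h i) i.castSucc
      push_neg at hnlt
      exact lt_of_le_of_ne hnlt (fun hEq => hne hEq.symm)
    · rw [hth i i.succ]
      simp only [Fin.val_succ]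
      omega
  refine ⟨hmain, ?_⟩
  rw [Fin.strictMono_iff_lt_succ]
  intro i
  exact lt_trans (hmain i).1 (hmain i).2

lemma key2 {k : ℕ} {μ : Fin (k+1) → ℝ} (hμ : StrictMono μ) {ρ : Fin k → ℝ} (hρ : Monotone ρ)
    (h : ∀ i : Fin (k+1), 0 < (-1:ℝ) ^ (k - (i:ℕ)) * ∏ j, (μ i - ρ j)) :
    ∀ i : Fin k, μ i.castSucc < ρ i ∧ ρ i < μ i.succ := by
  have hth := count_threshold hρ hμ (c := k) (by omega) (by omega) (by omega) (by omega) h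
  intro i
  have hik : (i:ℕ) < k := i.isLt
  constructor
  · rw [hth i.castSucc i]
    simp only [Fin.coe_castSucc]
    omega
  · have hnlt : ¬ μ i.succ < ρ i := by
      rw [hth i.succ i]
      simp only [Fin.val_succ]
      omega
    have hne := prod_ne_of_sign (h i.succ) i
    push_neg at hnlt
    exact lt_of_le_of_ne hnlt (hne ·.symm)

lemma sign_regen {k : ℕ} {μ : Fin (k+1) → ℝ} (hμ : StrictMono μ) {ρ : Fin (k+2) → ℝ}
    (hρ : StrictMono ρ)
    (hint : ∀ i : Fin (k+1), ρ i.castSucc < μ i ∧ μ i < ρ i.succ) :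
    ∀ i : Fin (k+2), 0 < (-1:ℝ) ^ (k + 1 - (i:ℕ)) * ∏ j, (ρ i - μ j) := by
  intro i
  have hiff : ∀ j : Fin (k+1), ρ i < μ j ↔ (i:ℕ) ≤ (j:ℕ) := by
    intro j
    constructor
    · intro hlt
      by_contra hcon
      push_neg at hcon
      have h1 : j.succ ≤ i := by rw [Fin.le_def]; simpa [Fin.val_succ] using hcon
      have := lt_of_lt_of_le (hint j).2 (hρ.monotone h1)
      linarith
    · intro hle
      have h1 : i ≤ j.castSucc := by rw [Fin.le_def]; simpa using hle
      exact lt_of_le_of_lt (hρ.monotone h1) (hint j).1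
  have hne : ∀ j, ρ i ≠ μ j := by
    intro j hEq
    rcases le_or_gt (i:ℕ) (j:ℕ) with hle | hlt
    · exact absurd ((hiff j).mpr hle) (by rw [hEq]; exact lt_irrefl _)
    · have h1 : j.succ ≤ i := by rw [Fin.le_def]; simpa [Fin.val_succ] using hlt
      have := lt_of_lt_of_le (hint j).2 (hρ.monotone h1)
      rw [hEq] at this
      exact lt_irrefl _ this
  have hcard : (univ.filter fun j : Fin (k+1) => ρ i < μ j).card = k + 1 - (i:ℕ) := by
    have hs : k + 1 - (i:ℕ) ≤ k + 1 := by omega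
    have := card_filter_le_val (m := k+1) hs
    rw [← this]
    congr 1
    ext j
    simp only [mem_filter, mem_univ, true_and, hiff j]
    have := i.isLt
    omega
  have := sign_prod (ρ i) μ hne
  rwa [hcard] at this


lemma charmatrix_submatrix_inj {R : Type*} [CommRing R] {m k : ℕ}
    (M : Matrix (Fin m) (Fin m) R) (e : Fin k → Fin m) (he : Function.Injective e) :
    (charmatrix M).submatrix e e = charmatrix (M.submatrix e e) := by
  ext i j
  by_cases hij : i = j
  · subst hij
    simp [Matrix.submatrix_apply]
  · have : e i ≠ e j := fun hEq => hij (he hEq)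
    simp [Matrix.submatrix_apply, charmatrix_apply_ne _ _ _ this, charmatrix_apply_ne _ _ _ hij]

lemma tridiag_rec {k : ℕ} (M : Matrix (Fin (k+2)) (Fin (k+2)) ℝ)
    (hup : ∀ i j : Fin (k+2), (i:ℕ) + 1 < (j:ℕ) → M i j = 0)
    (hlo : ∀ i j : Fin (k+2), (j:ℕ) + 1 < (i:ℕ) → M i j = 0) :
    M.charpoly = (X - C (M (Fin.last (k+1)) (Fin.last (k+1)))) *
        (M.submatrix Fin.castSucc Fin.castSucc).charpoly
      - C (M (Fin.last (k+1)) ((Fin.last k).castSucc)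
            * M ((Fin.last k).castSucc) (Fin.last (k+1))) *
        (M.submatrix (fun i : Fin k => i.castSucc.castSucc)
            (fun i : Fin k => i.castSucc.castSucc)).charpoly := by
  set last2 : Fin (k+2) := Fin.last (k+1) with hlast2
  set j0 : Fin (k+2) := (Fin.last k).castSucc with hj0
  have hj0v : (j0 : ℕ) = k := by simp [hj0]
  have hlast2v : (last2 : ℕ) = k + 1 := by simp [hlast2]
  -- the inner minor N
  set N : Matrix (Fin (k+1)) (Fin (k+1)) ℝ[X] :=
    (charmatrix M).submatrix last2.succAbove j0.succAbove with hN
  -- compute det N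
  have hNdet : N.det = -C (M j0 last2) *
      (M.submatrix (fun i : Fin k => i.castSucc.castSucc)
        (fun i : Fin k => i.castSucc.castSucc)).charpoly := by
    have hexp := Matrix.det_succ_column N (Fin.last k)
    rw [Fin.sum_univ_castSucc] at hexp
    have hzero : ∀ i : Fin k,
        (-1:ℝ[X]) ^ ((i.castSucc : ℕ) + (Fin.last k : ℕ)) * N i.castSucc (Fin.last k) *
          (N.submatrix i.castSucc.succAbove (Fin.last k).succAbove).det = 0 := by
      intro i
      have hcol : j0.succAbove (Fin.last k) = last2 := by
        rw [Fin.succAbove_of_le_castSucc _ _ (le_refl _), Fin.succ_last]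
      have hrow : last2.succAbove = Fin.castSucc := Fin.succAbove_last
      have hentry : N i.castSucc (Fin.last k) = 0 := by
        rw [hN]
        simp only [Matrix.submatrix_apply, hcol, hrow]
        have hne : i.castSucc.castSucc ≠ last2 := by
          intro hEq
          have := congrArg Fin.val hEq
          simp [hlast2] at this
          omega
        rw [charmatrix_apply_ne _ _ _ hne, hup _ _ (by
          simp only [Fin.coe_castSucc, hlast2v]; omega)]
        simp
      rw [hentry]
      ring
    rw [Finset.sum_eq_zero (fun i _ => hzero i), zero_add] at hexp
    -- the surviving term
    have hcol : j0.succAbove (Fin.last k) = last2 := by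
      rw [Fin.succAbove_of_le_castSucc _ _ (le_refl _), Fin.succ_last]
    have hrow : last2.succAbove = Fin.castSucc := Fin.succAbove_last
    have hentry : N (Fin.last k) (Fin.last k) = -C (M j0 last2) := by
      rw [hN]
      simp only [Matrix.submatrix_apply, hcol, hrow]
      have hne : (Fin.last k).castSucc ≠ last2 := by
        intro hEq
        have := congrArg Fin.val hEq
        simp [hlast2] at this
      rw [charmatrix_apply_ne _ _ _ hne]
    have hminor : N.submatrix (Fin.last k).succAbove (Fin.last k).succAbove
        = charmatrix (M.submatrix (fun i : Fin k => i.castSucc.castSucc)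
            (fun i : Fin k => i.castSucc.castSucc)) := by
      rw [hN, Matrix.submatrix_submatrix]
      have hcomp : j0.succAbove ∘ (Fin.last k).succAbove = fun i : Fin k => i.castSucc.castSucc := by
        funext l
        simp only [Function.comp_apply, Fin.succAbove_last]
        rw [Fin.succAbove_of_castSucc_lt]
        rw [Fin.castSucc_lt_castSucc_iff]
        exact Fin.castSucc_lt_last l
      have hcomp2 : last2.succAbove ∘ (Fin.last k).succAbove
          = fun i : Fin k => i.castSucc.castSucc := by
        funext l
        simp [hrow, Fin.succAbove_last]
      rw [hcomp, hcomp2]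
      exact charmatrix_submatrix_inj M _ (fun a b hab => by
        have := congrArg Fin.val hab
        simp at this
        exact Fin.ext this)
    rw [hexp, hentry, hminor]
    have hsign : (-1:ℝ[X]) ^ ((Fin.last k : ℕ) + (Fin.last k : ℕ)) = 1 := by
      rw [Fin.val_last, ← two_mul, pow_mul]
      norm_num
    rw [hsign, Matrix.charpoly]
    ring
  -- expand charpoly of M along the last row
  have hexp := Matrix.det_succ_row (charmatrix M) last2
  rw [Fin.sum_univ_castSucc, Fin.sum_univ_castSucc] at hexp
  have hzero : ∀ j : Fin k,
      (-1:ℝ[X]) ^ ((last2 : ℕ) + (j.castSucc.castSucc : ℕ)) *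
        charmatrix M last2 j.castSucc.castSucc *
        ((charmatrix M).submatrix last2.succAbove j.castSucc.castSucc.succAbove).det = 0 := by
    intro j
    have hne : last2 ≠ j.castSucc.castSucc := by
      intro hEq
      have := congrArg Fin.val hEq
      simp [hlast2] at this
      omega
    rw [charmatrix_apply_ne _ _ _ hne, hlo _ _ (by
      simp only [Fin.coe_castSucc, hlast2v]; omega)]
    simp
  rw [Finset.sum_eq_zero (fun j _ => hzero j), zero_add] at hexp
  have hterm_last : (-1:ℝ[X]) ^ ((last2 : ℕ) + (last2 : ℕ)) = 1 := by
    rw [hlast2v, ← two_mul, pow_mul]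
    norm_num
  have hterm_mid : (-1:ℝ[X]) ^ ((last2 : ℕ) + ((Fin.last k).castSucc : ℕ)) = -1 := by
    have : (last2 : ℕ) + ((Fin.last k).castSucc : ℕ) = 2 * k + 1 := by
      simp [hlast2v]
      omega
    rw [this, pow_succ, pow_mul]
    norm_num
  have hdiag : charmatrix M last2 last2 = X - C (M last2 last2) := charmatrix_apply_eq _ _
  have hmid : charmatrix M last2 (Fin.last k).castSucc = -C (M last2 j0) := by
    have hne : last2 ≠ (Fin.last k).castSucc := by
      intro hEq
      have := congrArg Fin.val hEq
      simp [hlast2] at this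
    rw [charmatrix_apply_ne _ _ _ hne, hj0]
  have hminor_last : (charmatrix M).submatrix last2.succAbove last2.succAbove
      = charmatrix (M.submatrix Fin.castSucc Fin.castSucc) := by
    rw [Fin.succAbove_last]
    exact charmatrix_submatrix_inj M _ (Fin.castSucc_injective _)
  have hNeq : (charmatrix M).submatrix last2.succAbove ((Fin.last k).castSucc).succAbove = N := by
    rw [hN, hj0]
  rw [hterm_last, hterm_mid, hdiag, hmid, hminor_last, hNeq, hNdet] at hexp
  rw [Matrix.charpoly, hexp, Matrix.charpoly, Matrix.charpoly, Polynomial.C_mul]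
  ring


lemma herm_charpoly {m : ℕ} (M : Matrix (Fin m) (Fin m) ℝ) (hM : M.IsHermitian) :
    ∃ ρ : Fin m → ℝ, Monotone ρ ∧ M.charpoly = ∏ i, (X - C (ρ i)) := by
  classical
  set U : Matrix (Fin m) (Fin m) ℝ := ((Matrix.IsHermitian.eigenvectorUnitary hM : unitaryGroup (Fin m) ℝ) : Matrix (Fin m) (Fin m) ℝ)
    with hU
  set D : Matrix (Fin m) (Fin m) ℝ := diagonal (RCLike.ofReal ∘ hM.eigenvalues) with hD
  have hspec : M = U * D * star U := hM.spectral_theorem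
  have hUU : U * star U = 1 :=
    (Matrix.mem_unitaryGroup_iff).mp (Matrix.IsHermitian.eigenvectorUnitary hM).2
  set φ : Matrix (Fin m) (Fin m) ℝ →+* Matrix (Fin m) (Fin m) ℝ[X] :=
    (C : ℝ →+* ℝ[X]).mapMatrix with hφ
  have hcm : charmatrix M = φ U * charmatrix D * φ (star U) := by
    show Matrix.scalar _ (X : ℝ[X]) - φ M = φ U * (Matrix.scalar _ (X : ℝ[X]) - φ D) * φ (star U)
    rw [mul_sub, sub_mul]
    congr 1
    · -- φ U * scalar X * φ (star U) = scalar X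
      have hcomm : φ U * Matrix.scalar _ (X : ℝ[X]) = Matrix.scalar _ (X : ℝ[X]) * φ U :=
        (Matrix.scalar_commute (X : ℝ[X]) (fun r => Commute.all _ _) (φ U)).symm
      rw [hcomm, mul_assoc, ← _root_.map_mul φ _ _, hUU, _root_.map_one φ, mul_one]
    · rw [← _root_.map_mul φ _ _, ← _root_.map_mul φ _ _, hspec]
  have hkey : M.charpoly = ∏ i, (X - C (hM.eigenvalues i)) := by
    rw [Matrix.charpoly, hcm, Matrix.det_mul, Matrix.det_mul]
    have h1 : (φ U).det * (φ (star U)).det = 1 := by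
      rw [← Matrix.det_mul, ← _root_.map_mul φ _ _, hUU, _root_.map_one φ, Matrix.det_one]
    have hDp : (charmatrix D).det = ∏ i, (X - C (hM.eigenvalues i)) := by
      have := Matrix.charpoly_of_upperTriangular D (by
        rw [hD]; exact Matrix.blockTriangular_diagonal _)
      rw [Matrix.charpoly] at this
      rw [this]
      refine Finset.prod_congr rfl fun i _ => ?_
      simp [hD, Matrix.diagonal_apply_eq, RCLike.ofReal_real_eq_id]
    calc (φ U).det * (charmatrix D).det * (φ (star U)).det
        = ((φ U).det * (φ (star U)).det) * (charmatrix D).det := by ring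
      _ = ∏ i, (X - C (hM.eigenvalues i)) := by rw [h1, one_mul, hDp]
  refine ⟨hM.eigenvalues ∘ Tuple.sort hM.eigenvalues, Tuple.monotone_sort _, ?_⟩
  rw [hkey]
  exact (Equiv.prod_comp (Tuple.sort hM.eigenvalues) (fun i => X - C (hM.eigenvalues i))).symm


/-- embedding of `Fin k` into `Fin (n+1)`, defined for all `k` (garbage for `k > n+1`). -/
def interEmb (n k : ℕ) (i : Fin k) : Fin (n+1) :=
  ⟨min i.val n, Nat.lt_succ_of_le (min_le_right _ _)⟩

lemma interEmb_val {n k : ℕ} (hk : k ≤ n + 1) (i : Fin k) : ((interEmb n k i) : ℕ) = i.val :=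
  min_eq_left (by omega)

lemma interlace_aux {n : ℕ} (A : Matrix (Fin (n + 1)) (Fin (n + 1)) ℝ)
    (hsymm : A.IsSymm)
    (htri : ∀ i j : Fin (n + 1), (i : ℕ) + 1 < (j : ℕ) → A i j = 0)
    (hb : ∀ i : Fin n, A i.castSucc i.succ ≠ 0) :
    ∀ k, k ≤ n → ∃ μ : Fin (k+1) → ℝ, StrictMono μ ∧
      (A.submatrix (interEmb n (k+1)) (interEmb n (k+1))).charpoly = ∏ i, (X - C (μ i)) ∧
      ∀ i : Fin (k+1), 0 < (-1:ℝ) ^ (k - (i:ℕ)) *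
        ((A.submatrix (interEmb n k) (interEmb n k)).charpoly).eval (μ i) := by
  intro k
  induction k with
  | zero =>
    intro _
    set B1 := A.submatrix (interEmb n 1) (interEmb n 1) with hB1
    refine ⟨fun _ => B1 0 0, fun a b hab => absurd hab (by omega), ?_, ?_⟩
    · rw [Matrix.charpoly, Matrix.det_fin_one, charmatrix_apply_eq, Fin.prod_univ_one]
    · intro i
      have h0 : (A.submatrix (interEmb n 0) (interEmb n 0)).charpoly = 1 := by
        rw [Matrix.charpoly, Matrix.det_fin_zero]
      rw [h0]
      norm_num
  | succ k ih =>
    intro hk1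
    obtain ⟨μ, hμs, hμfact, hμsign⟩ := ih (by omega)
    set M := A.submatrix (interEmb n (k+2)) (interEmb n (k+2)) with hM
    have hMup : ∀ i j : Fin (k+2), (i:ℕ) + 1 < (j:ℕ) → M i j = 0 := by
      intro i j hij
      rw [hM]
      simp only [Matrix.submatrix_apply]
      exact htri _ _ (by rw [interEmb_val (by omega), interEmb_val (by omega)]; exact hij)
    have hMlo : ∀ i j : Fin (k+2), (j:ℕ) + 1 < (i:ℕ) → M i j = 0 := by
      intro i j hij
      rw [hM]
      simp only [Matrix.submatrix_apply]
      rw [hsymm.apply]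
      exact htri _ _ (by rw [interEmb_val (by omega), interEmb_val (by omega)]; exact hij)
    have hsub1 : M.submatrix Fin.castSucc Fin.castSucc
        = A.submatrix (interEmb n (k+1)) (interEmb n (k+1)) := by
      rw [hM, Matrix.submatrix_submatrix]
      have h1 : interEmb n (k+2) ∘ Fin.castSucc = interEmb n (k+1) := by
        funext i
        exact Fin.ext (by simp [interEmb])
      rw [h1]
    have hsub2 : M.submatrix (fun i : Fin k => i.castSucc.castSucc)
          (fun i : Fin k => i.castSucc.castSucc)
        = A.submatrix (interEmb n k) (interEmb n k) := by
      rw [hM, Matrix.submatrix_submatrix]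
      have h1 : (interEmb n (k+2) ∘ fun i : Fin k => i.castSucc.castSucc) = interEmb n k := by
        funext i
        exact Fin.ext (by simp [interEmb])
      rw [h1]
    -- the off-diagonal entry
    set bq : ℝ := A (interEmb n (k+2) ((Fin.last k).castSucc)) (interEmb n (k+2) (Fin.last (k+1)))
      with hbq
    have hbq_ne : bq ≠ 0 := by
      have := hb ⟨k, by omega⟩
      have heq1 : interEmb n (k+2) ((Fin.last k).castSucc) = (⟨k, by omega⟩ : Fin n).castSucc :=
        Fin.ext (by simp [interEmb]; omega)
      have heq2 : interEmb n (k+2) (Fin.last (k+1)) = (⟨k, by omega⟩ : Fin n).succ :=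
        Fin.ext (by simp [interEmb]; omega)
      rw [hbq, heq1, heq2]
      exact this
    have hrec := tridiag_rec M hMup hMlo
    rw [hsub1, hsub2] at hrec
    have hbsymm : M (Fin.last (k+1)) ((Fin.last k).castSucc) = bq := by
      rw [hM]
      simp only [Matrix.submatrix_apply]
      rw [hsymm.apply, hbq]
    have hbsymm2 : M ((Fin.last k).castSucc) (Fin.last (k+1)) = bq := by
      rw [hM]
      simp only [Matrix.submatrix_apply, hbq]
    rw [hbsymm, hbsymm2] at hrec
    -- Hermitian / real factorization of M.charpoly
    have hherm : M.IsHermitian := by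
      rw [hM]
      ext i j
      simp only [Matrix.conjTranspose_apply, Matrix.submatrix_apply, star_trivial]
      exact hsymm.apply _ _
    obtain ⟨ρ, hρmono, hρfact⟩ := herm_charpoly M hherm
    -- the sign hypothesis for key1
    have hsign1 : ∀ i : Fin (k+1), 0 < (-1:ℝ) ^ (k + 1 - (i:ℕ)) * ∏ j, (μ i - ρ j) := by
      intro i
      have hil : (i:ℕ) ≤ k := by have := i.isLt; omega
      have hprodeval : ∏ j, (μ i - ρ j) = (M.charpoly).eval (μ i) := by
        rw [hρfact, eval_prod]
        simp
      have hμzero : ((A.submatrix (interEmb n (k+1)) (interEmb n (k+1))).charpoly).eval (μ i)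
          = 0 := by
        rw [hμfact, eval_prod]
        exact Finset.prod_eq_zero (mem_univ i) (by simp)
      have hpow : (k + 1 - (i:ℕ)) = (k - (i:ℕ)) + 1 := by omega
      rw [hprodeval, hrec, hpow, pow_succ]
      simp only [eval_sub, eval_mul, eval_X, eval_C, hμzero, mul_zero, zero_sub]
      nlinarith [mul_pos (mul_self_pos.mpr hbq_ne) (hμsign i)]
    obtain ⟨hint, hρstrict⟩ := key1 hμs hρmono hsign1
    refine ⟨ρ, hρstrict, hρfact, ?_⟩
    intro i
    have := sign_regen hμs hρstrict hint i
    rwa [hμfact, eval_prod, show (∏ j, ((X:ℝ[X]) - C (μ j)).eval (ρ i)) = ∏ j, (ρ i - μ j) by simp]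

/-- Strong Cauchy interlacing law for tridiagonal matrices.
Let `A` be an `(n+1)×(n+1)` real symmetric tridiagonal matrix whose off-diagonal
entries `A_{i,i+1}` are all nonzero.  Let `λ_1 ≤ ⋯ ≤ λ_{n+1}` be the eigenvalues of `A`
counted with multiplicity (monotone `lam` with `charpoly A = ∏ (X − λ_i)`) and let
`η_1 ≤ ⋯ ≤ η_n` be the eigenvalues of the leading principal `n×n` submatrix, counted
with multiplicity.  Then the interlacing is strict:
`λ_1 < η_1 < λ_2 < η_2 < ⋯ < λ_n < η_n < λ_{n+1}`. -/
theorem strong_cauchy_interlacing {n : ℕ}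
    (A : Matrix (Fin (n + 1)) (Fin (n + 1)) ℝ)
    (hsymm : A.IsSymm)
    (htri : ∀ i j : Fin (n + 1), (i : ℕ) + 1 < (j : ℕ) → A i j = 0)
    (hb : ∀ i : Fin n, A i.castSucc i.succ ≠ 0)
    (lam : Fin (n + 1) → ℝ) (eta : Fin n → ℝ)
    (hlam_mono : Monotone lam) (heta_mono : Monotone eta)
    (hlam : A.charpoly = ∏ i, (Polynomial.X - Polynomial.C (lam i)))
    (heta : (A.submatrix Fin.castSucc Fin.castSucc).charpoly
        = ∏ i, (Polynomial.X - Polynomial.C (eta i))) :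
    ∀ i : Fin n, lam i.castSucc < eta i ∧ eta i < lam i.succ := by
  obtain ⟨μ, hμs, hμfact, hμsign⟩ := interlace_aux A hsymm htri hb n (le_refl n)
  have hBn1 : A.submatrix (interEmb n (n+1)) (interEmb n (n+1)) = A := by
    have h1 : interEmb n (n+1) = id := by
      funext i
      refine Fin.ext ?_
      have := i.isLt
      simp only [interEmb, Fin.val_mk, id_eq]
      omega
    rw [h1, Matrix.submatrix_id_id]
  have hBn : A.submatrix (interEmb n n) (interEmb n n) = A.submatrix Fin.castSucc Fin.castSucc := by
    have h1 : interEmb n n = Fin.castSucc := by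
      funext i
      refine Fin.ext ?_
      have := i.isLt
      simp only [interEmb, Fin.val_mk, Fin.coe_castSucc]
      omega
    rw [h1]
  rw [hBn1] at hμfact
  rw [hBn, heta] at hμsign
  have hlamμ : lam = μ := prod_X_sub_C_inj hlam_mono hμs.monotone (by rw [← hlam, ← hμfact])
  have hsign' : ∀ i : Fin (n+1), 0 < (-1:ℝ) ^ (n - (i:ℕ)) * ∏ j, (μ i - eta j) := by
    intro i
    have := hμsign i
    rwa [eval_prod, show (∏ j, ((X:ℝ[X]) - C (eta j)).eval (μ i)) = ∏ j, (μ i - eta j) by simp]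
      at this
  rw [hlamμ]
  exact key2 hμs heta_mono hsign'
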